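/- The function $u(c) = \frac{1}{c}\sum_{r=1}^{\infty}\frac{r^{r-2}}{r!}(ce^{-c})^r$ is differentiable at every $c > 0$, with derivative given by termwise differentiation: $u'(c) = \sum_{r=1}^{\infty}\left(\frac{(1-c)}{c^2}\frac{r^{r-1}}{r!}(ce^{-c})^r - \frac{1}{c^2}\frac{r^{r-2}}{r!}(ce^{-c})^r\right)$. -/

import Mathlib

open Real

lemma stirling_ge (n : ℕ) (hn : 1 ≤ n) :
    Real.sqrt (2 * n) * ((n : ℝ) / Real.exp 1) ^ n ≤ n.factorial := by
  have h1 : Real.sqrt π ≤ Stirling.stirlingSeq n := by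
    obtain ⟨k, rfl⟩ := Nat.exists_eq_add_of_le hn
    have := Stirling.stirlingSeq'_antitone.le_of_tendsto
      (Stirling.tendsto_stirlingSeq_sqrt_pi.comp (Filter.tendsto_add_atTop_nat 1)) k
    simpa [Function.comp, Nat.succ_eq_add_one, Nat.add_comm] using this
  have h2 : (1 : ℝ) ≤ Real.sqrt π := by
    rw [show (1:ℝ) = Real.sqrt 1 by simp]
    exact Real.sqrt_le_sqrt (by linarith [Real.pi_gt_three])
  have hpos : 0 < Real.sqrt (2 * n) * ((n : ℝ) / Real.exp 1) ^ n := by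
    have : (0:ℝ) < n := by exact_mod_cast hn
    positivity
  have := le_trans h2 h1
  rw [Stirling.stirlingSeq, le_div_iff₀ hpos] at this
  linarith

lemma pow_div_fact_le' (n : ℕ) (hn : 1 ≤ n) :
    (n : ℝ) ^ ((n : ℝ) - 1) / (Nat.factorial n) ≤ Real.exp 1 ^ n / (n : ℝ) ^ (3/2 : ℝ) := by
  have hn0 : (0:ℝ) < n := by exact_mod_cast hn
  have hfac : Real.sqrt (2 * n) * ((n : ℝ) / Real.exp 1) ^ n ≤ n.factorial := stirling_ge n hn
  have hden : (0:ℝ) < Real.sqrt (2 * n) * ((n : ℝ) / Real.exp 1) ^ n := by positivity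
  have step1 : (n : ℝ) ^ ((n : ℝ) - 1) / n.factorial
      ≤ (n : ℝ) ^ ((n : ℝ) - 1) / (Real.sqrt (2 * n) * ((n : ℝ) / Real.exp 1) ^ n) :=
    div_le_div_of_nonneg_left (by positivity) hden hfac
  refine step1.trans ?_
  have hrw : (n : ℝ) ^ ((n : ℝ) - 1) = (n : ℝ) ^ n / n := by
    rw [Real.rpow_sub hn0, Real.rpow_one, Real.rpow_natCast]
  have hsq : (n:ℝ) ^ (1/2:ℝ) ≤ Real.sqrt (2*n) := by
    rw [Real.sqrt_eq_rpow]
    exact Real.rpow_le_rpow hn0.le (by linarith) (by norm_num)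
  have hs : (0:ℝ) < Real.sqrt (2*n) := by positivity
  have hnn : (0:ℝ) < (n:ℝ)^n := by positivity
  have hE : (0:ℝ) < Real.exp 1 ^ n := by positivity
  have heq : (n:ℝ)^((n:ℝ)-1) / (Real.sqrt (2*n) * ((n:ℝ)/Real.exp 1)^n)
      = Real.exp 1 ^ n / ((n:ℝ) * Real.sqrt (2*n)) := by
    rw [hrw, div_pow]
    field_simp
  rw [heq]
  have h32 : (n:ℝ)^(3/2:ℝ) = n * (n:ℝ)^(1/2:ℝ) := by
    rw [show (3/2:ℝ) = 1 + 1/2 by norm_num, Real.rpow_add hn0, Real.rpow_one]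
  rw [h32]
  have h12 : (0:ℝ) < (n:ℝ)^(1/2:ℝ) := by positivity
  exact div_le_div_of_nonneg_left hE.le (by positivity)
    (by nlinarith)

noncomputable def Fa (r : ℕ) : ℝ := (r : ℝ) ^ ((r : ℝ) - 2) / (Nat.factorial r)
noncomputable def Ff (r : ℕ) (t : ℝ) : ℝ := Fa r * (t * Real.exp (-t)) ^ r
noncomputable def Fd (r : ℕ) (t : ℝ) : ℝ :=
  Fa r * ((r : ℕ) * (t * Real.exp (-t)) ^ (r - 1) * ((1 - t) * Real.exp (-t)))

lemma phi_hasDerivAt (t : ℝ) :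
    HasDerivAt (fun t : ℝ => t * Real.exp (-t)) ((1 - t) * Real.exp (-t)) t := by
  have h : HasDerivAt (fun t : ℝ => Real.exp (-t)) (Real.exp (-t) * (-1)) t :=
    (hasDerivAt_neg t).exp
  have := (hasDerivAt_id t).mul h
  refine this.congr_deriv ?_
  simp only [id_eq]
  ring

lemma Ff_hasDerivAt (r : ℕ) (t : ℝ) : HasDerivAt (Ff r) (Fd r t) t := by
  have := ((phi_hasDerivAt t).pow r).const_mul (Fa r)
  exact this

lemma phi_le (t : ℝ) : t * Real.exp (-t) ≤ Real.exp (-1) := by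
  have h1 : t ≤ Real.exp (t - 1) := by
    have := Real.add_one_le_exp (t - 1)
    linarith
  calc t * Real.exp (-t) ≤ Real.exp (t - 1) * Real.exp (-t) :=
        mul_le_mul_of_nonneg_right h1 (Real.exp_pos _).le
    _ = Real.exp (-1) := by rw [← Real.exp_add]; ring_nf

lemma Fd_bound (c : ℝ) (hc : 0 < c) (r : ℕ) (t : ℝ) (ht : t ∈ Set.Ioo (0:ℝ) (c+1)) :
    ‖Fd r t‖ ≤ Real.exp 1 * (1 + c) * (1 / (r : ℝ) ^ (3/2 : ℝ)) := by
  obtain ⟨ht0, ht1⟩ := ht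
  rcases Nat.eq_zero_or_pos r with rfl | hr
  · simp [Fd]
  obtain ⟨k, rfl⟩ : ∃ k, r = k + 1 := ⟨r - 1, (Nat.succ_pred_eq_of_pos hr).symm⟩
  set r := k + 1
  have hr0 : (0:ℝ) < r := by positivity
  have hφ0 : 0 ≤ t * Real.exp (-t) := by positivity
  have hφle : t * Real.exp (-t) ≤ (Real.exp 1)⁻¹ := by
    simpa [Real.exp_neg] using phi_le t
  have h1t : |1 - t| ≤ 1 + c := abs_le.2 ⟨by linarith, by linarith⟩
  have het : Real.exp (-t) ≤ 1 := Real.exp_le_one_iff.2 (by linarith)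
  have ha : 0 ≤ Fa r := by
    unfold Fa; positivity
  have hnorm : ‖Fd r t‖
      = Fa r * (r : ℝ) * (t * Real.exp (-t)) ^ k * |1 - t| * Real.exp (-t) := by
    unfold Fd
    simp only [Real.norm_eq_abs, abs_mul, abs_pow, show r - 1 = k from rfl]
    rw [abs_of_nonneg ha, abs_of_nonneg ht0.le, abs_of_nonneg (Real.exp_pos (-t)).le, Nat.abs_cast]
    ring
  rw [hnorm]
  have hstep : Fa r * (r : ℝ) = (r : ℝ) ^ ((r : ℝ) - 1) / (Nat.factorial r) := by
    unfold Fa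
    rw [show (r:ℝ) - 1 = ((r:ℝ) - 2) + 1 by ring, Real.rpow_add hr0, Real.rpow_one]
    ring
  rw [hstep]
  calc (r : ℝ) ^ ((r : ℝ) - 1) / (Nat.factorial r) * (t * Real.exp (-t)) ^ k * |1 - t|
        * Real.exp (-t)
      ≤ (Real.exp 1 ^ r / (r : ℝ) ^ (3/2 : ℝ)) * ((Real.exp 1)⁻¹) ^ k * (1 + c) * 1 := by
        gcongr ?_ * ?_ * ?_ * ?_
        all_goals try positivity
        all_goals try assumption
        all_goals try exact pow_div_fact_le' r (Nat.le_add_left 1 k)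
        all_goals try exact pow_le_pow_left₀ hφ0 hφle k
    _ = Real.exp 1 * (1 + c) * (1 / (r : ℝ) ^ (3/2 : ℝ)) := by
        have hE : Real.exp 1 ^ r * ((Real.exp 1)⁻¹) ^ k = Real.exp 1 := by
          rw [pow_succ, inv_pow, mul_comm (Real.exp 1 ^ k), mul_assoc,
            mul_inv_cancel₀ (pow_ne_zero _ (Real.exp_ne_zero 1)), mul_one]
        rw [show Real.exp 1 ^ r / (r : ℝ) ^ (3/2 : ℝ) * ((Real.exp 1)⁻¹) ^ k * (1 + c) * 1
            = (Real.exp 1 ^ r * ((Real.exp 1)⁻¹) ^ k) * (1 + c) * (1 / (r : ℝ) ^ (3/2 : ℝ))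
            by ring, hE]

lemma Ff_bound (r : ℕ) (t : ℝ) (ht0 : 0 < t) :
    Ff r t ≤ 1 / (r : ℝ) ^ (3/2 : ℝ) := by
  rcases Nat.eq_zero_or_pos r with rfl | hr
  · simp [Ff, Fa, Real.zero_rpow (by norm_num : (0:ℝ) - 2 ≠ 0)]
  have hr0 : (0:ℝ) < r := by exact_mod_cast hr
  have hr1 : (1:ℝ) ≤ r := by exact_mod_cast hr
  have hφ0 : 0 ≤ t * Real.exp (-t) := by positivity
  have hφle : t * Real.exp (-t) ≤ (Real.exp 1)⁻¹ := by
    simpa [Real.exp_neg] using phi_le t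
  have h1 : Fa r ≤ (r : ℝ) ^ ((r : ℝ) - 1) / (Nat.factorial r) := by
    unfold Fa
    have : (r:ℝ) ^ ((r:ℝ) - 2) ≤ (r:ℝ) ^ ((r:ℝ) - 1) :=
      Real.rpow_le_rpow_of_exponent_le hr1 (by linarith)
    have hf : (0:ℝ) < (Nat.factorial r : ℝ) := by exact_mod_cast r.factorial_pos
    gcongr
  calc Ff r t ≤ ((r : ℝ) ^ ((r : ℝ) - 1) / (Nat.factorial r)) * ((Real.exp 1)⁻¹) ^ r := by
        unfold Ff
        have hB : (0:ℝ) ≤ (t * Real.exp (-t)) ^ r := by positivity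
        gcongr ?_ * ?_
        all_goals try positivity
        all_goals try assumption
        all_goals try exact pow_le_pow_left₀ hφ0 hφle r
    _ ≤ (Real.exp 1 ^ r / (r : ℝ) ^ (3/2 : ℝ)) * ((Real.exp 1)⁻¹) ^ r := by
        gcongr ?_ * ?_
        all_goals try positivity
        all_goals try exact le_refl _
        all_goals try exact pow_div_fact_le' r hr
    _ = 1 / (r : ℝ) ^ (3/2 : ℝ) := by
        rw [inv_pow]
        field_simp

/-- The function `u c = (1/c) ∑_{r≥1} (r^(r-2)/r!) (c e^{-c})^r` is differentiable at every
`c > 0` with derivative given by termwise differentiation. -/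
theorem u_hasDerivAt (c : ℝ) (hc : 0 < c) :
    HasDerivAt
      (fun t : ℝ => (1 / t) * ∑' r : ℕ,
        (r : ℝ) ^ ((r : ℝ) - 2) / (Nat.factorial r) * (t * Real.exp (-t)) ^ r)
      (∑' r : ℕ,
        ((1 - c) / c ^ 2 * ((r : ℝ) ^ ((r : ℝ) - 1) / (Nat.factorial r))
            * (c * Real.exp (-c)) ^ r
         - 1 / c ^ 2 * ((r : ℝ) ^ ((r : ℝ) - 2) / (Nat.factorial r))
            * (c * Real.exp (-c)) ^ r))
      c := by
  have hcs : c ∈ Set.Ioo (0:ℝ) (c+1) := ⟨hc, by linarith⟩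
  have hvsum : Summable (fun r : ℕ => 1 / (r:ℝ)^(3/2:ℝ)) := by
    simpa [one_div] using Real.summable_one_div_nat_rpow.mpr (by norm_num : (1:ℝ) < 3/2)
  have husum : Summable (fun r : ℕ => Real.exp 1 * (1+c) * (1/(r:ℝ)^(3/2:ℝ))) :=
    hvsum.mul_left _
  have hFsum : ∀ t ∈ Set.Ioo (0:ℝ) (c+1), Summable (fun r => Ff r t) := by
    intro t ht
    have ht0 : 0 < t := ht.1
    refine Summable.of_nonneg_of_le (fun r => ?_) (fun r => Ff_bound r t ht0) hvsum
    unfold Ff Fa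
    positivity
  have hg : HasDerivAt (fun t => ∑' r, Ff r t) (∑' r, Fd r c) c :=
    hasDerivAt_of_tendstoUniformlyOn isOpen_Ioo
      (tendstoUniformlyOn_tsum_nat husum (fun r t ht => Fd_bound c hc r t ht))
      (Filter.Eventually.of_forall fun N t _ => HasDerivAt.sum fun r _ => Ff_hasDerivAt r t)
      (fun t ht => by simpa [Finset.sum_apply] using (hFsum t ht).hasSum.tendsto_sum_nat) hcs
  have hinv : HasDerivAt (fun t : ℝ => 1/t) (-(1/c^2)) c := by
    simpa [one_div] using hasDerivAt_inv (ne_of_gt hc)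
  have hprod := hinv.mul hg
  have hFdsum : Summable (fun r => Fd r c) :=
    Summable.of_norm_bounded husum (fun r => Fd_bound c hc r c hcs)
  have hterm : ∀ r : ℕ,
      ((1 - c) / c ^ 2 * ((r : ℝ) ^ ((r : ℝ) - 1) / (Nat.factorial r))
            * (c * Real.exp (-c)) ^ r
         - 1 / c ^ 2 * ((r : ℝ) ^ ((r : ℝ) - 2) / (Nat.factorial r))
            * (c * Real.exp (-c)) ^ r)
      = (1/c) * Fd r c - (1/c^2) * Ff r c := by
    intro r
    rcases Nat.eq_zero_or_pos r with rfl | hr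
    · simp [Fd, Ff, Fa, Real.zero_rpow (by norm_num : (0:ℝ) - 2 ≠ 0),
        Real.zero_rpow (by norm_num : (0:ℝ) - 1 ≠ 0)]
    obtain ⟨k, rfl⟩ : ∃ k, r = k + 1 := ⟨r - 1, (Nat.succ_pred_eq_of_pos hr).symm⟩
    set r := k + 1 with hrdef
    have hr0 : (0:ℝ) < r := by positivity
    have hpow : (r:ℝ) ^ ((r:ℝ) - 1) = (r:ℝ) ^ ((r:ℝ) - 2) * r := by
      rw [show (r:ℝ) - 1 = ((r:ℝ) - 2) + 1 by ring, Real.rpow_add hr0, Real.rpow_one]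
    unfold Fd Ff Fa
    rw [hpow, show r - 1 = k from rfl, pow_succ (c * Real.exp (-c)) k]
    have hfac : ((Nat.factorial r : ℝ)) ≠ 0 := by
      exact_mod_cast r.factorial_pos.ne'
    field_simp
  have hval :
      (∑' r : ℕ,
        ((1 - c) / c ^ 2 * ((r : ℝ) ^ ((r : ℝ) - 1) / (Nat.factorial r))
            * (c * Real.exp (-c)) ^ r
         - 1 / c ^ 2 * ((r : ℝ) ^ ((r : ℝ) - 2) / (Nat.factorial r))
            * (c * Real.exp (-c)) ^ r))
      = -(1/c^2) * (∑' r, Ff r c) + (1/c) * (∑' r, Fd r c) := by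
    rw [tsum_congr hterm, Summable.tsum_sub (hFdsum.mul_left _) ((hFsum c hcs).mul_left _),
      tsum_mul_left, tsum_mul_left]
    ring
  rw [hval]
  exact hprod
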